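/- For A₁(η) = (1/6)[[-1-e^{2iη}, 2(1+e^{2iη}), 5-e^{2iη}],[2(1+e^{2iη}), 2(1-2e^{2iη}), 2(1+e^{2iη})],[5-e^{2iη}, 2(1+e^{2iη}), -1-e^{2iη}]] with entries nonzero, and any function φ : ℤ → ℂ not identically zero, the function Ψ(x) = (φ(x), (1/2)(φ(x)+φ(x-1)), φ(x-1)) satisfies U_{A₁(η)}Ψ = Ψ. Consequently, the stationary measure μ(x) = (5/4)(|φ(x)|² + |φ(x-1)|²) + (1/2)Re(φ(x)·conj(φ(x-1))) is independent of the parameter η. -/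

import Mathlib

open Complex Matrix Finset

noncomputable def walk (A : Matrix (Fin 3) (Fin 3) ℂ) (Ψ : ℤ → Fin 3 → ℂ) : ℤ → Fin 3 → ℂ :=
  fun x => ![∑ j, A 0 j * Ψ (x + 1) j, ∑ j, A 1 j * Ψ x j, ∑ j, A 2 j * Ψ (x - 1) j]

noncomputable def A₁ (η : ℝ) : Matrix (Fin 3) (Fin 3) ℂ :=
  (1 / 6 : ℂ) • !![-1 - Complex.exp (2 * Complex.I * η), 2 * (1 + Complex.exp (2 * Complex.I * η)),
      5 - Complex.exp (2 * Complex.I * η);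
    2 * (1 + Complex.exp (2 * Complex.I * η)), 2 * (1 - 2 * Complex.exp (2 * Complex.I * η)),
      2 * (1 + Complex.exp (2 * Complex.I * η));
    5 - Complex.exp (2 * Complex.I * η), 2 * (1 + Complex.exp (2 * Complex.I * η)),
      -1 - Complex.exp (2 * Complex.I * η)]

theorem A₁_type2_stationary (η : ℝ) (hne : ∀ i j, A₁ η i j ≠ 0)
    (φ : ℤ → ℂ) (hφ : ∃ x, φ x ≠ 0)
    (Ψ : ℤ → Fin 3 → ℂ)
    (hΨ : Ψ = fun x => ![φ x, (1 / 2 : ℂ) * (φ x + φ (x - 1)), φ (x - 1)]) :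
    walk (A₁ η) Ψ = Ψ ∧
    ∀ x : ℤ, ∑ i, ‖Ψ x i‖ ^ 2 =
      (5 / 4) * (‖φ x‖ ^ 2 + ‖φ (x - 1)‖ ^ 2) + (1 / 2) * (φ x * (starRingEnd ℂ) (φ (x - 1))).re := by
  constructor
  · funext x i
    fin_cases i <;>
    · simp [walk, A₁, hΨ, Fin.sum_univ_three, add_sub_cancel_right]
      ring
  · intro x
    simp only [hΨ, Fin.sum_univ_three, Matrix.cons_val_zero, Matrix.cons_val_one,
      Matrix.head_cons, Matrix.cons_val_two, Matrix.tail_cons]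
    have h : ∀ z : ℂ, ‖z‖ ^ 2 = z.re ^ 2 + z.im ^ 2 := by
      intro z
      rw [← Complex.normSq_eq_norm_sq]
      simp [Complex.normSq_apply]
      ring
    simp only [h, Complex.mul_re, Complex.add_re, Complex.add_im, Complex.mul_im,
      Complex.conj_re, Complex.conj_im, Complex.one_re, Complex.one_im,
      Complex.div_re, Complex.div_im]
    norm_num
    ring
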